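/- The quaternion algebra ℍ[ℚ₂, −6, 2] over the field ℚ₂ of 2-adic numbers, with i² = −6, j² = 2, ij = −ji, is a division ring. -/

import Mathlib

open Quaternion

private lemma e1 : ∀ a b c d : ZMod (2^3), 2*a^2 + 3*b^2 - c^2 - 6*d^2 = 0 → b.val % 2 = 1 → False := by
  decide

private lemma e2 : ∀ a b c d : ZMod (2^3), a^2 + 6*b^2 - 2*c^2 - 3*d^2 = 0 → d.val % 2 = 1 → False := by
  decide

private lemma odd_image (B : ℤ_[2]) (h : ¬ (2:ℤ_[2]) ∣ B) :
    (PadicInt.toZModPow 3 B).val % 2 = 1 := by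
  by_contra h'
  have h2 : (PadicInt.toZModPow 3 B).val % 2 = 0 := by omega
  obtain ⟨k, hk⟩ := Nat.dvd_of_mod_eq_zero h2
  apply h
  have hker : PadicInt.toZModPow 3 (B - 2 * (k : ℤ_[2])) = 0 := by
    rw [map_sub, map_mul, map_natCast, map_ofNat]
    have hB : (PadicInt.toZModPow 3 B) = ((PadicInt.toZModPow 3 B).val : ZMod (2^3)) :=
      (ZMod.natCast_rightInverse _).symm
    rw [hB, hk]
    push_cast
    ring
  have hmem : B - 2 * (k : ℤ_[2]) ∈ RingHom.ker (PadicInt.toZModPow (p := 2) 3) := hker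
  rw [PadicInt.ker_toZModPow, Ideal.mem_span_singleton] at hmem
  have hcast : ((2:ℕ) : ℤ_[2]) = 2 := by norm_cast
  rw [hcast] at hmem
  have h8 : (2:ℤ_[2]) ∣ B - 2 * (k:ℤ_[2]) := dvd_trans (dvd_pow_self 2 (by norm_num)) hmem
  have : B = (B - 2 * (k:ℤ_[2])) + 2 * (k:ℤ_[2]) := by ring
  rw [this]
  exact dvd_add h8 (dvd_mul_right 2 _)

private lemma pint (A B C D : ℤ_[2]) (h : A^2 + 6*B^2 - 2*C^2 - 12*D^2 = 0)
    (hprim : ¬ (2:ℤ_[2]) ∣ A ∨ ¬ (2:ℤ_[2]) ∣ B ∨ ¬ (2:ℤ_[2]) ∣ C ∨ ¬ (2:ℤ_[2]) ∣ D) :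
    False := by
  have hp : Prime (2:ℤ_[2]) := by
    have := PadicInt.prime_p (p := 2)
    have hcast : ((2:ℕ) : ℤ_[2]) = 2 := by norm_cast
    rwa [hcast] at this
  have htwo : (2:ℤ_[2]) ≠ 0 := hp.ne_zero
  have hA : (2:ℤ_[2]) ∣ A :=
    hp.dvd_of_dvd_pow (n := 2) ⟨C^2 + 6*D^2 - 3*B^2, by linear_combination h⟩
  obtain ⟨A₁, rfl⟩ := hA
  have h2 : 2*A₁^2 + 3*B^2 - C^2 - 6*D^2 = 0 := by
    apply mul_left_cancel₀ htwo
    linear_combination h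
  by_cases hB : (2:ℤ_[2]) ∣ B
  · obtain ⟨B₁, rfl⟩ := hB
    have hC : (2:ℤ_[2]) ∣ C :=
      hp.dvd_of_dvd_pow (n := 2) ⟨A₁^2 + 6*B₁^2 - 3*D^2, by linear_combination -h2⟩
    obtain ⟨C₁, rfl⟩ := hC
    have h3 : A₁^2 + 6*B₁^2 - 2*C₁^2 - 3*D^2 = 0 := by
      apply mul_left_cancel₀ htwo
      linear_combination h2
    have hD : ¬ (2:ℤ_[2]) ∣ D := by
      rcases hprim with h' | h' | h' | h'
      · exact absurd (dvd_mul_right 2 A₁) h'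
      · exact absurd (dvd_mul_right 2 B₁) h'
      · exact absurd (dvd_mul_right 2 C₁) h'
      · exact h'
    refine e2 (PadicInt.toZModPow 3 A₁) (PadicInt.toZModPow 3 B₁)
      (PadicInt.toZModPow 3 C₁) (PadicInt.toZModPow 3 D) ?_ (odd_image D hD)
    have := congrArg (PadicInt.toZModPow 3) h3
    simpa only [map_add, map_sub, map_mul, map_pow, map_ofNat, map_zero] using this
  · refine e1 (PadicInt.toZModPow 3 A₁) (PadicInt.toZModPow 3 B)
      (PadicInt.toZModPow 3 C) (PadicInt.toZModPow 3 D) ?_ (odd_image B hB)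
    have := congrArg (PadicInt.toZModPow 3) h2
    simpa only [map_add, map_sub, map_mul, map_pow, map_ofNat, map_zero] using this

private lemma notdvd (x : ℚ_[2]) (hx : ‖x‖ ≤ 1) (h1 : ‖x‖ = 1) :
    ¬ (2:ℤ_[2]) ∣ (⟨x, hx⟩ : ℤ_[2]) := by
  intro hdvd
  have hcast : ((2:ℕ) : ℤ_[2]) = 2 := by norm_cast
  have hlt := (PadicInt.norm_lt_one_iff_dvd (⟨x, hx⟩ : ℤ_[2])).2 (by rw [hcast]; exact hdvd)
  have hlt2 : ‖x‖ < 1 := hlt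
  rw [h1] at hlt2
  exact lt_irrefl 1 hlt2

private lemma bounded (a b c d : ℚ_[2]) (ha : ‖a‖ ≤ 1) (hb : ‖b‖ ≤ 1) (hc : ‖c‖ ≤ 1)
    (hd : ‖d‖ ≤ 1) (h : a^2 + 6*b^2 - 2*c^2 - 12*d^2 = 0)
    (hu : ‖a‖ = 1 ∨ ‖b‖ = 1 ∨ ‖c‖ = 1 ∨ ‖d‖ = 1) : False := by
  set A : ℤ_[2] := ⟨a, ha⟩ with hA
  set B : ℤ_[2] := ⟨b, hb⟩ with hB
  set C : ℤ_[2] := ⟨c, hc⟩ with hC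
  set D : ℤ_[2] := ⟨d, hd⟩ with hD
  have hZ : A^2 + 6*B^2 - 2*C^2 - 12*D^2 = 0 := by
    apply Subtype.ext
    push_cast [hA, hB, hC, hD]
    exact h
  apply pint A B C D hZ
  rcases hu with h' | h' | h' | h'
  · exact Or.inl (notdvd a ha h')
  · exact Or.inr (Or.inl (notdvd b hb h'))
  · exact Or.inr (Or.inr (Or.inl (notdvd c hc h')))
  · exact Or.inr (Or.inr (Or.inr (notdvd d hd h')))

private lemma aniso (a b c d : ℚ_[2]) (h : a^2 + 6*b^2 - 2*c^2 - 12*d^2 = 0) :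
    a = 0 ∧ b = 0 ∧ c = 0 ∧ d = 0 := by
  by_contra H
  have hne : a ≠ 0 ∨ b ≠ 0 ∨ c ≠ 0 ∨ d ≠ 0 := by tauto
  set M := max (max ‖a‖ ‖b‖) (max ‖c‖ ‖d‖) with hM
  have haM : ‖a‖ ≤ M := le_trans (le_max_left _ _) (le_max_left _ _)
  have hbM : ‖b‖ ≤ M := le_trans (le_max_right _ _) (le_max_left _ _)
  have hcM : ‖c‖ ≤ M := le_trans (le_max_left _ _) (le_max_right _ _)
  have hdM : ‖d‖ ≤ M := le_trans (le_max_right _ _) (le_max_right _ _)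
  have hMpos : 0 < M := by
    rcases hne with h' | h' | h' | h'
    · exact lt_of_lt_of_le (norm_pos_iff.2 h') haM
    · exact lt_of_lt_of_le (norm_pos_iff.2 h') hbM
    · exact lt_of_lt_of_le (norm_pos_iff.2 h') hcM
    · exact lt_of_lt_of_le (norm_pos_iff.2 h') hdM
  have hatt : M = ‖a‖ ∨ M = ‖b‖ ∨ M = ‖c‖ ∨ M = ‖d‖ := by
    rcases max_choice (max ‖a‖ ‖b‖) (max ‖c‖ ‖d‖) with h1 | h1
    · rcases max_choice ‖a‖ ‖b‖ with h2 | h2 <;> rw [hM, h1, h2] <;> tauto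
    · rcases max_choice ‖c‖ ‖d‖ with h2 | h2 <;> rw [hM, h1, h2] <;> tauto
  have key : ∀ x : ℚ_[2], ‖x‖ = M → False := by
    intro x hx
    have hx0 : x ≠ 0 := by
      intro h0
      rw [h0, norm_zero] at hx
      exact hMpos.ne hx
    have hxinv : ‖x⁻¹‖ = M⁻¹ := by rw [norm_inv, hx]
    have hbd : ∀ y : ℚ_[2], ‖y‖ ≤ M → ‖x⁻¹ * y‖ ≤ 1 := by
      intro y hy
      rw [norm_mul, hxinv]
      calc M⁻¹ * ‖y‖ ≤ M⁻¹ * M :=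
            mul_le_mul_of_nonneg_left hy (inv_nonneg.2 hMpos.le)
        _ = 1 := inv_mul_cancel₀ hMpos.ne'
    have heq1 : ∀ y : ℚ_[2], M = ‖y‖ → ‖x⁻¹ * y‖ = 1 := by
      intro y hy
      rw [norm_mul, hxinv, ← hy]
      exact inv_mul_cancel₀ hMpos.ne'
    apply bounded (x⁻¹*a) (x⁻¹*b) (x⁻¹*c) (x⁻¹*d) (hbd a haM) (hbd b hbM) (hbd c hcM)
      (hbd d hdM)
    · linear_combination (x⁻¹)^2 * h
    · rcases hatt with h' | h' | h' | h'
      · exact Or.inl (heq1 a h')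
      · exact Or.inr (Or.inl (heq1 b h'))
      · exact Or.inr (Or.inr (Or.inl (heq1 c h')))
      · exact Or.inr (Or.inr (Or.inr (heq1 d h')))
  rcases hatt with h' | h' | h' | h'
  · exact key a h'.symm
  · exact key b h'.symm
  · exact key c h'.symm
  · exact key d h'.symm

/-- The quaternion algebra `(−6, 2 / ℚ₂)` over the 2-adic numbers is a division ring:
every nonzero element is invertible. -/
theorem stmt_5 :
    ∀ x : ℍ[ℚ_[2], -6, 2], x ≠ 0 → ∃ y : ℍ[ℚ_[2], -6, 2], x * y = 1 ∧ y * x = 1 := by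
  intro x hx
  set n : ℚ_[2] := x.re^2 + 6*x.imI^2 - 2*x.imJ^2 - 12*x.imK^2 with hn
  have hn0 : n ≠ 0 := by
    intro h0
    obtain ⟨h1, h2, h3, h4⟩ := aniso x.re x.imI x.imJ x.imK (by rw [← hn]; exact h0)
    apply hx
    ext <;> simp [h1, h2, h3, h4]
  have hxs : x * star x = ((n : ℚ_[2]) : ℍ[ℚ_[2], -6, 2]) := by
    ext <;>
      simp only [QuaternionAlgebra.re_mul, QuaternionAlgebra.imI_mul, QuaternionAlgebra.imJ_mul,
        QuaternionAlgebra.imK_mul, QuaternionAlgebra.re_coe, QuaternionAlgebra.imI_coe,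
        QuaternionAlgebra.imJ_coe, QuaternionAlgebra.imK_coe, QuaternionAlgebra.re_star,
        QuaternionAlgebra.imI_star, QuaternionAlgebra.imJ_star, QuaternionAlgebra.imK_star] <;>
      ring
  have hsx : star x * x = ((n : ℚ_[2]) : ℍ[ℚ_[2], -6, 2]) := by
    ext <;>
      simp only [QuaternionAlgebra.re_mul, QuaternionAlgebra.imI_mul, QuaternionAlgebra.imJ_mul,
        QuaternionAlgebra.imK_mul, QuaternionAlgebra.re_coe, QuaternionAlgebra.imI_coe,
        QuaternionAlgebra.imJ_coe, QuaternionAlgebra.imK_coe, QuaternionAlgebra.re_star,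
        QuaternionAlgebra.imI_star, QuaternionAlgebra.imJ_star, QuaternionAlgebra.imK_star] <;>
      ring
  refine ⟨star x * ((n⁻¹ : ℚ_[2]) : ℍ[ℚ_[2], -6, 2]), ?_, ?_⟩
  · rw [← mul_assoc, hxs, ← QuaternionAlgebra.coe_mul, mul_inv_cancel₀ hn0,
      QuaternionAlgebra.coe_one]
  · rw [mul_assoc, QuaternionAlgebra.coe_commutes, ← mul_assoc, hsx,
      ← QuaternionAlgebra.coe_mul, mul_inv_cancel₀ hn0, QuaternionAlgebra.coe_one]
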